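/- For integers k ≥ 2 and c ≥ 1, the double series Σ_{0<n_1<n_2} (1/(n_1(n_2+c)^k)) converges and equals a ℚ-linear combination of multiple zeta values of weight at most k+1 and depth at most 2. -/

import Mathlib

open Finset Filter

/-- The set of multiple zeta values of weight at most `w` and depth at most `d`
(including 1 as the empty multiple zeta value). -/
def mzvSet (w d : ℕ) : Set ℝ :=
  {x | ∃ (r : ℕ) (k : Fin r → ℕ), (∀ i, 1 ≤ k i) ∧
    (∀ i : Fin r, (i : ℕ) = r - 1 → 2 ≤ k i) ∧ (∑ i, k i) ≤ w ∧ r ≤ d ∧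
    x = ∑' n : {n : Fin r → ℕ+ // StrictMono n}, ∏ i, ((n.1 i : ℝ))⁻¹ ^ (k i)}

lemma my_summable_shift (a m : ℕ) (hm : 2 ≤ m) :
    Summable (fun n : ℕ => (((n:ℝ)+1+a) ^ m)⁻¹) := by
  have h : Summable (fun n : ℕ => ((n:ℝ) ^ m)⁻¹) := by
    simpa [one_div] using Real.summable_one_div_nat_pow.mpr hm
  have hinj : Function.Injective (fun n : ℕ => n + (1 + a)) := fun x y hxy => by
    simpa using hxy
  have h2 := h.comp_injective hinj
  refine h2.congr fun n => ?_
  simp only [Function.comp]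
  push_cast
  ring_nf

/-- Telescoping sum. -/
lemma my_hasSum_tele (j : ℕ) :
    HasSum (fun n : ℕ => ((n:ℝ)+1)⁻¹ - ((n:ℝ)+1+j)⁻¹)
      (∑ m ∈ range j, ((m:ℝ)+1)⁻¹) := by
  have hnn : ∀ i : ℕ, 0 ≤ ((i:ℝ)+1)⁻¹ - ((i:ℝ)+1+j)⁻¹ := by
    intro i
    have : ((i:ℝ)+1+j)⁻¹ ≤ ((i:ℝ)+1)⁻¹ := by
      apply inv_anti₀ (by positivity)
      simp
    linarith
  rw [hasSum_iff_tendsto_nat_of_nonneg hnn]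
  have key : ∀ N : ℕ, ∑ n ∈ range N, (((n:ℝ)+1)⁻¹ - ((n:ℝ)+1+j)⁻¹)
      = ∑ m ∈ range j, ((m:ℝ)+1)⁻¹ - ∑ i ∈ range j, ((N:ℝ)+i+1)⁻¹ := by
    intro N
    have e1 : ∀ n : ℕ, ((n:ℝ)+1+j) = (((n+j:ℕ)):ℝ)+1 := by intro n; push_cast; ring
    rw [Finset.sum_sub_distrib]
    have e2 : ∑ n ∈ range N, ((n:ℝ)+1+j)⁻¹ = ∑ n ∈ range N, (((n+j:ℕ):ℝ)+1)⁻¹ := by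
      refine Finset.sum_congr rfl fun n _ => by rw [e1]
    rw [e2]
    have e3 : ∑ n ∈ range (j + N), (((n:ℕ):ℝ)+1)⁻¹
        = ∑ n ∈ range j, ((n:ℝ)+1)⁻¹ + ∑ n ∈ range N, (((j+n:ℕ):ℝ)+1)⁻¹ :=
      Finset.sum_range_add _ j N
    have e4 : ∑ n ∈ range (N + j), (((n:ℕ):ℝ)+1)⁻¹
        = ∑ n ∈ range N, ((n:ℝ)+1)⁻¹ + ∑ n ∈ range j, (((N+n:ℕ):ℝ)+1)⁻¹ :=
      Finset.sum_range_add _ N j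
    have e5 : (j + N) = (N + j) := by omega
    rw [e5] at e3
    have e6 : ∑ n ∈ range N, (((n+j:ℕ):ℝ)+1)⁻¹ = ∑ n ∈ range N, (((j+n:ℕ):ℝ)+1)⁻¹ := by
      refine Finset.sum_congr rfl fun n _ => by rw [Nat.add_comm]
    rw [e6]
    have e7 : ∑ n ∈ range j, (((N+n:ℕ):ℝ)+1)⁻¹ = ∑ i ∈ range j, ((N:ℝ)+i+1)⁻¹ := by
      refine Finset.sum_congr rfl fun n _ => by push_cast; ring_nf
    linarith [e3, e4, e7]
  simp only [key]
  have : Tendsto (fun N : ℕ => ∑ i ∈ range j, ((N:ℝ)+i+1)⁻¹) atTop (nhds 0) := by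
    apply squeeze_zero (g := fun N : ℕ => (j:ℝ) * ((N:ℝ)+1)⁻¹)
    · intro N; positivity
    · intro N
      calc ∑ i ∈ range j, ((N:ℝ)+i+1)⁻¹ ≤ ∑ _i ∈ range j, ((N:ℝ)+1)⁻¹ := by
            refine Finset.sum_le_sum fun i _ => ?_
            apply inv_anti₀ (by positivity)
            have : (0:ℝ) ≤ i := by positivity
            linarith
        _ = (j:ℝ) * ((N:ℝ)+1)⁻¹ := by simp [mul_comm]
    · have h1 : Tendsto (fun N : ℕ => ((N:ℝ)+1)⁻¹) atTop (nhds 0) := by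
        apply Tendsto.comp tendsto_inv_atTop_zero
        exact tendsto_atTop_add_const_right _ _ tendsto_natCast_atTop_atTop
      simpa using h1.const_mul (j:ℝ)
  simpa using (tendsto_const_nhds (x := ∑ m ∈ range j, ((m:ℝ)+1)⁻¹)).sub this

lemma my_one_mem (w d : ℕ) : (1:ℝ) ∈ mzvSet w d := by
  refine ⟨0, Fin.elim0, fun i => i.elim0, fun i => i.elim0, by simp, by simp, ?_⟩
  have x0 : {n : Fin 0 → ℕ+ // StrictMono n} :=
    ⟨Fin.elim0, fun a => a.elim0⟩
  have hsub : Subsingleton {n : Fin 0 → ℕ+ // StrictMono n} := by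
    constructor
    rintro ⟨f, _⟩ ⟨g, _⟩
    exact Subtype.ext (funext fun i => i.elim0)
  rw [tsum_eq_single x0 (fun b hb => absurd (hsub.elim b x0) hb)]
  simp

def myEqOne : ℕ ≃ {n : Fin 1 → ℕ+ // StrictMono n} where
  toFun := fun n => ⟨fun _ => n.succPNat, fun a b hab => absurd (Subsingleton.elim a b) (by
      intro h; rw [h] at hab; exact lt_irrefl _ hab)⟩
  invFun := fun s => (s.1 0).natPred
  left_inv := fun n => by simp
  right_inv := fun s => by
    refine Subtype.ext (funext fun i => ?_)
    have : i = 0 := Subsingleton.elim i 0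
    simp [this]

lemma my_zeta_mem (m w d : ℕ) (hm : 2 ≤ m) (hw : m ≤ w) (hd : 1 ≤ d) :
    (∑' n : ℕ, (((n:ℝ)+1) ^ m)⁻¹) ∈ mzvSet w d := by
  refine ⟨1, fun _ => m, fun _ => by show 1 ≤ m; omega, fun _ _ => hm, by simpa using hw, hd, ?_⟩
  rw [← myEqOne.tsum_eq]
  refine tsum_congr fun n => ?_
  simp only [myEqOne, Equiv.coe_fn_mk]
  rw [Fin.prod_univ_one, inv_pow]
  congr 2
  simp [Nat.succPNat]

def myEqTwo : {n : Fin 2 → ℕ+ // StrictMono n} ≃ {p : ℕ+ × ℕ+ // p.1 < p.2} where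
  toFun := fun n => ⟨(n.1 0, n.1 1), n.2 (by norm_num : (0:Fin 2) < 1)⟩
  invFun := fun p => ⟨![p.1.1, p.1.2], by
    rw [Fin.strictMono_iff_lt_succ]
    intro i
    have : i = 0 := Subsingleton.elim i 0
    simpa [this] using p.2⟩
  left_inv := fun n => by
    refine Subtype.ext (funext fun i => ?_)
    fin_cases i <;> simp
  right_inv := fun p => by
    refine Subtype.ext ?_
    simp

lemma my_zeta2_mem (m w : ℕ) (hm : 2 ≤ m) (hw : m + 1 ≤ w) :
    (∑' p : {p : ℕ+ × ℕ+ // p.1 < p.2}, ((p.1.1:ℝ))⁻¹ * (((p.1.2:ℝ))⁻¹)^m)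
      ∈ mzvSet w 2 := by
  refine ⟨2, ![1, m], ?_, ?_, ?_, le_refl 2, ?_⟩
  · intro i; fin_cases i <;> simp [hm]; omega
  · intro i hi
    have : i = 1 := by omega
    simp [this, hm]
  · simp [Fin.sum_univ_two]; omega
  · rw [← myEqTwo.symm.tsum_eq]
    refine tsum_congr fun p => ?_
    simp only [myEqTwo, Equiv.symm, Equiv.coe_fn_mk, Fin.prod_univ_two]
    simp

lemma my_summable_A (j m : ℕ) (hm : 1 ≤ m) :
    Summable (fun n : ℕ => (((n:ℝ)+1) * ((n:ℝ)+1+j)^m)⁻¹) := by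
  refine Summable.of_nonneg_of_le (fun n => by positivity) (fun n => ?_)
    (my_summable_shift 0 2 le_rfl)
  have hn0 : (0:ℝ) ≤ (n:ℝ) := Nat.cast_nonneg n
  have hj0 : (0:ℝ) ≤ (j:ℝ) := Nat.cast_nonneg j
  have h1 : ((n:ℝ)+1+((0:ℕ):ℝ))^2 ≤ ((n:ℝ)+1) * ((n:ℝ)+1+j)^m := by
    have hb : (1:ℝ) ≤ (n:ℝ)+1+j := by linarith
    have h2 : ((n:ℝ)+1+j)^1 ≤ ((n:ℝ)+1+j)^m := pow_le_pow_right₀ hb hm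
    have h3 : (n:ℝ)+1 ≤ (n:ℝ)+1+j := by linarith
    calc ((n:ℝ)+1+((0:ℕ):ℝ))^2 = ((n:ℝ)+1)*((n:ℝ)+1) := by push_cast; ring
      _ ≤ ((n:ℝ)+1)*((n:ℝ)+1+j) := by nlinarith
      _ ≤ ((n:ℝ)+1)*((n:ℝ)+1+j)^m := by
          rw [pow_one] at h2
          exact mul_le_mul_of_nonneg_left h2 (by linarith)
  exact inv_anti₀ (by positivity) h1

lemma my_shift_tsum (a m : ℕ) (hm : 2 ≤ m) :
    ∑' n : ℕ, (((n:ℝ)+1+a)^m)⁻¹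
      = (∑' n : ℕ, (((n:ℝ)+1)^m)⁻¹) - ∑ i ∈ range a, (((i:ℝ)+1)^m)⁻¹ := by
  have hs := my_summable_shift 0 m hm
  have hs' : Summable (fun n : ℕ => (((n:ℝ)+1)^m)⁻¹) := by
    refine hs.congr fun n => by norm_num
  have h := Summable.sum_add_tsum_nat_add (f := fun n : ℕ => (((n:ℝ)+1)^m)⁻¹) a hs'
  have e : ∑' n : ℕ, ((((n+a:ℕ):ℝ)+1)^m)⁻¹ = ∑' n : ℕ, (((n:ℝ)+1+a)^m)⁻¹ := by
    refine tsum_congr fun n => by push_cast; ring_nf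
  rw [← e]
  rw [← h]
  ring

lemma my_A_mem (w j m : ℕ) (hj : 1 ≤ j) (hm : 1 ≤ m) (hw : m ≤ w) :
    (∑' n : ℕ, (((n:ℝ)+1) * ((n:ℝ)+1+j)^m)⁻¹)
      ∈ Submodule.span ℚ (mzvSet w 2) := by
  induction m with
  | zero => omega
  | succ m ih =>
    have hj0 : ((j:ℝ)) ≠ 0 := by positivity
    rcases Nat.eq_or_lt_of_le hm with h1 | h1
    · -- m + 1 = 1, i.e. m = 0
      have hm0 : m = 0 := by omega
      subst hm0
      have key : (fun n : ℕ => (((n:ℝ)+1) * ((n:ℝ)+1+j)^1)⁻¹)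
          = fun n : ℕ => (j:ℝ)⁻¹ * (((n:ℝ)+1)⁻¹ - ((n:ℝ)+1+j)⁻¹) := by
        funext n
        have h2 : ((n:ℝ)+1) ≠ 0 := by positivity
        have h3 : ((n:ℝ)+1+j) ≠ 0 := by positivity
        field_simp
        ring
      rw [key]
      rw [((my_hasSum_tele j).mul_left ((j:ℝ)⁻¹)).tsum_eq]
      set q : ℚ := (j:ℚ)⁻¹ * ∑ m ∈ range j, ((m:ℚ)+1)⁻¹ with hq
      have : (j:ℝ)⁻¹ * (∑ m ∈ range j, ((m:ℝ)+1)⁻¹) = q • (1:ℝ) := by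
        rw [Rat.smul_one_eq_cast, hq]
        push_cast
        ring
      rw [this]
      exact Submodule.smul_mem _ q (Submodule.subset_span (my_one_mem w 2))
    · -- 1 ≤ m
      have hm1 : 1 ≤ m := by omega
      have key : (fun n : ℕ => (((n:ℝ)+1) * ((n:ℝ)+1+j)^(m+1))⁻¹)
          = fun n : ℕ => (j:ℝ)⁻¹ * ((((n:ℝ)+1) * ((n:ℝ)+1+j)^m)⁻¹
              - (((n:ℝ)+1+j)^(m+1))⁻¹) := by
        funext n
        have h2 : ((n:ℝ)+1) ≠ 0 := by positivity
        have h3 : ((n:ℝ)+1+j) ≠ 0 := by positivity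
        have h4 : ((n:ℝ)+1+j)^m ≠ 0 := pow_ne_zero _ h3
        field_simp
        ring
      rw [key, tsum_mul_left,
        Summable.tsum_sub (my_summable_A j m hm1) (my_summable_shift j (m+1) (by omega)),
        my_shift_tsum j (m+1) (by omega)]
      have hz := Submodule.subset_span (R := ℚ) (my_zeta_mem (m+1) w 2 (by omega) hw (by norm_num))
      have hone := Submodule.subset_span (R := ℚ) (my_one_mem w 2)
      have hA := ih hm1 (by omega)
      set q : ℚ := ∑ i ∈ range j, (((i:ℚ)+1)^(m+1))⁻¹ with hqdef
      have hq : (∑ i ∈ range j, (((i:ℝ)+1)^(m+1))⁻¹) = q • (1:ℝ) := by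
        rw [Rat.smul_one_eq_cast, hqdef]
        push_cast
        ring
      rw [hq]
      set A := ∑' n : ℕ, (((n:ℝ)+1) * ((n:ℝ)+1+j)^m)⁻¹ with hA'
      set Z := ∑' n : ℕ, (((n:ℝ)+1)^(m+1))⁻¹ with hZ'
      have expr : (j:ℝ)⁻¹ * (A - (Z - q • (1:ℝ))) = ((j:ℚ)⁻¹) • (A - (Z - q • (1:ℝ))) := by
        simp only [Rat.smul_def]; push_cast; ring
      rw [expr]
      exact Submodule.smul_mem _ _ (Submodule.sub_mem _ hA
        (Submodule.sub_mem _ hz (Submodule.smul_mem _ q hone)))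

lemma my_summable_G (k : ℕ) (hk : 2 ≤ k) :
    Summable (fun p : {p : ℕ+ × ℕ+ // p.1 < p.2} =>
      ((p.1.1 : ℝ) * (p.1.2 : ℝ) ^ k)⁻¹) := by
  -- bound by product of n^{-3/2}
  have hb1 : Summable (fun n : ℕ+ => (((n:ℕ):ℝ) ^ (3/2 : ℝ))⁻¹) := by
    have h := Real.summable_nat_rpow_inv.mpr (by norm_num : (1:ℝ) < 3/2)
    exact h.comp_injective PNat.coe_injective
  have hprod : Summable (fun p : ℕ+ × ℕ+ =>
      (((p.1:ℕ):ℝ) ^ (3/2 : ℝ))⁻¹ * (((p.2:ℕ):ℝ) ^ (3/2 : ℝ))⁻¹) :=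
    hb1.mul_of_nonneg hb1 (fun n => by positivity) (fun n => by positivity)
  have hsub := hprod.subtype {p : ℕ+ × ℕ+ | p.1 < p.2}
  refine Summable.of_nonneg_of_le (fun p => by positivity) (fun p => ?_) hsub
  obtain ⟨⟨n1, n2⟩, hlt⟩ := p
  simp only [Function.comp]
  set x : ℝ := ((n1:ℕ):ℝ) with hx
  set y : ℝ := ((n2:ℕ):ℝ) with hy
  have hx1 : 1 ≤ x := Nat.one_le_cast.mpr n1.property
  have hy1 : 1 ≤ y := Nat.one_le_cast.mpr n2.property
  have hxy : x ≤ y :=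
    Nat.cast_le.mpr (le_of_lt ((PNat.coe_lt_coe _ _).mpr hlt))
  have hx0 : (0:ℝ) < x := by linarith
  have hy0 : (0:ℝ) < y := by linarith
  have hrw : ∀ z : ℝ, 0 < z → z ^ (3/2 : ℝ) = z * Real.sqrt z := by
    intro z hz
    have h32 : (3/2:ℝ) = 1 + 1/2 := by norm_num
    rw [h32, Real.rpow_add hz, Real.rpow_one, Real.sqrt_eq_rpow]
  rw [hrw x hx0, hrw y hy0, ← mul_inv]
  apply inv_anti₀ (by positivity)
  have hsq : Real.sqrt x * Real.sqrt y ≤ y := by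
    calc Real.sqrt x * Real.sqrt y ≤ Real.sqrt y * Real.sqrt y :=
          mul_le_mul_of_nonneg_right (Real.sqrt_le_sqrt hxy) (Real.sqrt_nonneg y)
      _ = y := Real.mul_self_sqrt (le_of_lt hy0)
  have h2k : y ^ 2 ≤ y ^ k := pow_le_pow_right₀ hy1 hk
  calc x * Real.sqrt x * (y * Real.sqrt y)
      = (x * y) * (Real.sqrt x * Real.sqrt y) := by ring
    _ ≤ (x * y) * y := by
        apply mul_le_mul_of_nonneg_left hsq (by positivity)
    _ = x * y ^ 2 := by ring
    _ ≤ x * y ^ k := by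
        exact mul_le_mul_of_nonneg_left h2k (by positivity)

/-- Σ_{0<n₁<n₂} 1/(n₁(n₂+c)^k) converges and is a ℚ-linear combination of
multiple zeta values of weight ≤ k+1 and depth ≤ 2. -/
theorem stmt_19 (k : ℕ) (hk : 2 ≤ k) (c : ℕ) (hc : 1 ≤ c) :
    Summable (fun p : {p : ℕ+ × ℕ+ // p.1 < p.2} =>
        (1 : ℝ) / ((p.1.1 : ℝ) * ((p.1.2 : ℝ) + (c : ℝ)) ^ k)) ∧
    (∑' p : {p : ℕ+ × ℕ+ // p.1 < p.2},
        (1 : ℝ) / ((p.1.1 : ℝ) * ((p.1.2 : ℝ) + (c : ℝ)) ^ k))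
      ∈ Submodule.span ℚ (mzvSet (k + 1) 2) := by
  set P := {p : ℕ+ × ℕ+ // p.1 < p.2} with hP
  set G : P → ℝ := fun p => ((p.1.1 : ℝ) * (p.1.2 : ℝ) ^ k)⁻¹ with hG
  set F : P → ℝ := fun p => (1 : ℝ) / ((p.1.1 : ℝ) * ((p.1.2 : ℝ) + (c : ℝ)) ^ k) with hF
  have hGs : Summable G := my_summable_G k hk
  -- F ≤ G pointwise, so F is summable
  have hFG : ∀ p : P, F p ≤ G p := by
    intro p
    simp only [hF, hG, one_div]
    apply inv_anti₀
    · have h1 : (0:ℝ) < (p.1.1:ℝ) := by exact_mod_cast p.1.1.pos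
      have h2 : (0:ℝ) < (p.1.2:ℝ) := by exact_mod_cast p.1.2.pos
      positivity
    · have h1 : (0:ℝ) < (p.1.1:ℝ) := by exact_mod_cast p.1.1.pos
      have h2 : (0:ℝ) < (p.1.2:ℝ) := by exact_mod_cast p.1.2.pos
      have h3 : (p.1.2:ℝ)^k ≤ ((p.1.2:ℝ) + c)^k := by
        apply pow_le_pow_left₀ (le_of_lt h2)
        have : (0:ℝ) ≤ (c:ℝ) := by positivity
        linarith
      exact mul_le_mul_of_nonneg_left h3 (le_of_lt h1)
  have hFnn : ∀ p : P, 0 ≤ F p := by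
    intro p
    simp only [hF, one_div]
    have h1 : (0:ℝ) < (p.1.1:ℝ) := by exact_mod_cast p.1.1.pos
    have h2 : (0:ℝ) < (p.1.2:ℝ) := by exact_mod_cast p.1.2.pos
    positivity
  have hFs : Summable F := Summable.of_nonneg_of_le hFnn hFG hGs
  refine ⟨hFs, ?_⟩
  -- the shift map
  set cC : ℕ+ := ⟨c, hc⟩ with hcC
  have hccn : ((cC:ℕ)) = c := rfl
  set φ : P → P := fun p => ⟨(p.1.1, p.1.2 + cC), by
    change p.1.1 < p.1.2 + cC
    exact lt_trans p.2 (PNat.lt_add_right _ _)⟩ with hφ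
  have hφinj : Function.Injective φ := by
    intro a b h
    have h1 : (φ a).1.1 = (φ b).1.1 := congrArg (fun z : P => z.1.1) h
    have h2 : (φ a).1.2 = (φ b).1.2 := congrArg (fun z : P => z.1.2) h
    have h1' : a.1.1 = b.1.1 := h1
    have h2' : a.1.2 + cC = b.1.2 + cC := h2
    exact Subtype.ext (Prod.ext h1' (add_right_cancel h2'))
  have hGφF : ∀ p : P, G (φ p) = F p := by
    intro p
    show ((p.1.1 : ℝ) * (((p.1.2 + cC : ℕ+):ℕ) : ℝ) ^ k)⁻¹ = _
    rw [PNat.add_coe, hccn, hF]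
    simp only [one_div]
    push_cast
    ring_nf
  -- characterization of the range of φ
  have hrange : ∀ p : P, p ∈ Set.range φ ↔ (p.1.1:ℕ) + c < (p.1.2:ℕ) := by
    intro p
    constructor
    · rintro ⟨q, rfl⟩
      have h1 : ((φ q).1.2 : ℕ) = (q.1.2:ℕ) + c := by
        show ((q.1.2 + cC : ℕ+):ℕ) = _
        rw [PNat.add_coe, hccn]
      have h2 : ((φ q).1.1 : ℕ) = (q.1.1:ℕ) := rfl
      have h3 := (PNat.coe_lt_coe _ _).mpr q.2
      omega
    · intro h
      refine ⟨⟨(p.1.1, ⟨(p.1.2:ℕ) - c, by omega⟩), by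
        rw [← PNat.coe_lt_coe]
        show (p.1.1:ℕ) < (p.1.2:ℕ) - c
        omega⟩, ?_⟩
      refine Subtype.ext (Prod.ext rfl ?_)
      apply PNat.coe_injective
      show ((⟨(p.1.2:ℕ) - c, _⟩ + cC : ℕ+) : ℕ) = (p.1.2:ℕ)
      show (p.1.2:ℕ) - c + (cC:ℕ) = (p.1.2:ℕ)
      rw [hccn]
      omega
  -- splitting the sum
  have hsr : Summable (G ∘ Subtype.val : Set.range φ → ℝ) := hGs.subtype _
  have hsc : Summable (G ∘ Subtype.val : ↥(Set.range φ)ᶜ → ℝ) := hGs.subtype _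
  have hsplit := Summable.tsum_add_tsum_compl (f := G) (s := Set.range φ) hsr hsc
  have hrangeEq : ∑' (x : Set.range φ), G x = ∑' p : P, F p := by
    rw [← (Equiv.ofInjective φ hφinj).tsum_eq (fun y : Set.range φ => G y)]
    exact tsum_congr fun p => hGφF p
  -- the complement sum
  set ψ0 : Fin c × ℕ+ → P := fun x =>
    ⟨(x.2, x.2 + ⟨x.1.val + 1, Nat.succ_pos _⟩), PNat.lt_add_right _ _⟩ with hψ0
  have hψ0snd : ∀ x : Fin c × ℕ+, ((ψ0 x).1.2 : ℕ) = (x.2:ℕ) + (x.1:ℕ) + 1 := by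
    intro x
    show ((x.2 + ⟨x.1.val + 1, Nat.succ_pos _⟩ : ℕ+):ℕ) = _
    show (x.2:ℕ) + (x.1.val + 1) = _
    omega
  have hψ0fst : ∀ x : Fin c × ℕ+, ((ψ0 x).1.1 : ℕ) = (x.2:ℕ) := fun x => rfl
  have hψ0mem : ∀ x, ψ0 x ∈ (Set.range φ)ᶜ := by
    intro x
    simp only [Set.mem_compl_iff, hrange]
    rw [hψ0snd x, hψ0fst x]
    have := x.1.2
    omega
  set ψ1 : Fin c × ℕ+ → ↥(Set.range φ)ᶜ := fun x => ⟨ψ0 x, hψ0mem x⟩ with hψ1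
  have hψbij : Function.Bijective ψ1 := by
    constructor
    · intro a b h
      have h' : ψ0 a = ψ0 b := congrArg Subtype.val h
      have e1 : a.2 = b.2 := congrArg (fun z : P => z.1.1) h'
      have e2 : ((ψ0 a).1.2 : ℕ) = ((ψ0 b).1.2 : ℕ) := congrArg (fun z : P => (z.1.2:ℕ)) h'
      rw [hψ0snd, hψ0snd] at e2
      have e1' : (a.2:ℕ) = (b.2:ℕ) := congrArg _ e1
      have e3 : a.1 = b.1 := Fin.ext (by omega)
      exact Prod.ext e3 e1
    · rintro ⟨p, hmem⟩
      simp only [Set.mem_compl_iff, hrange] at hmem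
      have hlt' := (PNat.coe_lt_coe _ _).mpr p.2
      have hj : (p.1.2:ℕ) - (p.1.1:ℕ) - 1 < c := by omega
      refine ⟨(⟨(p.1.2:ℕ) - (p.1.1:ℕ) - 1, hj⟩, p.1.1), ?_⟩
      refine Subtype.ext (Subtype.ext (Prod.ext rfl ?_))
      apply PNat.coe_injective
      show (((p.1.1 : ℕ+) + ⟨(p.1.2:ℕ) - (p.1.1:ℕ) - 1 + 1, _⟩ : ℕ+) : ℕ) = ((p.1.2:ℕ+):ℕ)
      show (p.1.1:ℕ) + ((p.1.2:ℕ) - (p.1.1:ℕ) - 1 + 1) = (p.1.2:ℕ)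
      omega
  set ψ : Fin c × ℕ+ ≃ ↥(Set.range φ)ᶜ := Equiv.ofBijective ψ1 hψbij with hψ
  have hterm : ∀ (j : Fin c) (n : ℕ+),
      G (ψ (j, n)) = (((n:ℕ):ℝ) * (((n:ℕ):ℝ)+((j:ℕ)+1))^k)⁻¹ := by
    intro j n
    show (((((ψ0 (j,n)).1.1 : ℕ+):ℕ):ℝ) * ((((ψ0 (j,n)).1.2 : ℕ+):ℕ):ℝ) ^ k)⁻¹ = _
    rw [hψ0snd, hψ0fst]
    push_cast
    ring_nf
  have htermN : ∀ (j : Fin c) (n : ℕ),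
      G (ψ (j, Equiv.pnatEquivNat.symm n)) = (((n:ℝ)+1) * ((n:ℝ)+1+((j:ℕ)+1))^k)⁻¹ := by
    intro j n
    rw [hterm]
    have h5 : ((Equiv.pnatEquivNat.symm n : ℕ+):ℕ) = n + 1 := rfl
    rw [h5]
    push_cast
    ring_nf
  have hcompl : ∑' (x : ↥(Set.range φ)ᶜ), G x
      = ∑ j : Fin c, ∑' n : ℕ, (((n:ℝ)+1) * ((n:ℝ)+1+((j:ℕ)+1))^k)⁻¹ := by
    rw [← ψ.tsum_eq (fun y : ↥(Set.range φ)ᶜ => G y)]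
    have hsumm1 : ∀ j : Fin c, Summable (fun n : ℕ+ => G (ψ (j, n))) := by
      intro j
      have hA := my_summable_A ((j:ℕ)+1) k (by omega)
      refine (Equiv.pnatEquivNat.symm.summable_iff
        (f := fun n : ℕ+ => G (ψ (j, n)))).mp ?_
      refine hA.congr fun n => ?_
      simp only [Function.comp_apply]
      rw [htermN j n]
      push_cast
      ring_nf
    have hsumm : Summable (fun x : Fin c × ℕ+ => G (ψ x)) := by
      have h6 := (ψ.summable_iff (f := (G ∘ Subtype.val : ↥(Set.range φ)ᶜ → ℝ))).mpr hsc
      exact h6.congr fun x => rfl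
    rw [Summable.tsum_prod' hsumm (fun j => hsumm1 j), tsum_fintype]
    refine Finset.sum_congr rfl fun j _ => ?_
    rw [← Equiv.pnatEquivNat.symm.tsum_eq (fun n : ℕ+ => G (ψ (j, n)))]
    exact tsum_congr fun n => htermN j n
  -- final value and membership
  have hval : ∑' p : P, F p = (∑' p : P, G p)
      - ∑ j : Fin c, ∑' n : ℕ, (((n:ℝ)+1) * ((n:ℝ)+1+((j:ℕ)+1))^k)⁻¹ := by
    rw [← hcompl, ← hrangeEq]
    linarith [hsplit]
  rw [hval]
  apply Submodule.sub_mem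
  · have heq : ∑' p : P, G p
        = ∑' p : {p : ℕ+ × ℕ+ // p.1 < p.2}, ((p.1.1:ℝ))⁻¹ * (((p.1.2:ℝ))⁻¹)^k :=
      tsum_congr fun p => by simp only [hG, mul_inv, ← inv_pow]
    rw [heq]
    exact Submodule.subset_span (my_zeta2_mem k (k+1) hk (le_refl _))
  · apply Submodule.sum_mem
    intro j _
    have := my_A_mem (k+1) ((j:ℕ)+1) k (by omega) (by omega) (by omega)
    push_cast at this ⊢
    convert this using 3
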